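/- Let T = (R,V,W,S) be a Morita context. The prime radical of T equals (P(R), V_0, W_0, P(S)), where V_0 = {v ∈ V : vW ⊆ P(R)} = {v ∈ V : Wv ⊆ P(S)} and W_0 = {w ∈ W : wV ⊆ P(S)} = {w ∈ W : Vw ⊆ P(R)}. -/

import Mathlib

/-- A Morita context `(R,V,W,S)`: rings `R`, `S`, an `(R,S)`-bimodule `V`,
an `(S,R)`-bimodule `W`, and context products `V × W → R`, `W × V → S`
making the `2 × 2` matrix set an associative ring. -/
structure MoritaContext (R S V W : Type*) [Ring R] [Ring S]
    [AddCommGroup V] [AddCommGroup W] : Type _ where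
  smulRV : R → V → V
  smulVS : V → S → V
  smulSW : S → W → W
  smulWR : W → R → W
  mulVW : V → W → R
  mulWV : W → V → S
  smulRV_add : ∀ r v v', smulRV r (v + v') = smulRV r v + smulRV r v'
  add_smulRV : ∀ r r' v, smulRV (r + r') v = smulRV r v + smulRV r' v
  mul_smulRV : ∀ r r' v, smulRV (r * r') v = smulRV r (smulRV r' v)
  one_smulRV : ∀ v, smulRV 1 v = v
  smulVS_add : ∀ v v' s, smulVS (v + v') s = smulVS v s + smulVS v' s
  add_smulVS : ∀ v s s', smulVS v (s + s') = smulVS v s + smulVS v s'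
  mul_smulVS : ∀ v s s', smulVS v (s * s') = smulVS (smulVS v s) s'
  one_smulVS : ∀ v, smulVS v 1 = v
  smul_assocRVS : ∀ r v s, smulVS (smulRV r v) s = smulRV r (smulVS v s)
  smulSW_add : ∀ s w w', smulSW s (w + w') = smulSW s w + smulSW s w'
  add_smulSW : ∀ s s' w, smulSW (s + s') w = smulSW s w + smulSW s' w
  mul_smulSW : ∀ s s' w, smulSW (s * s') w = smulSW s (smulSW s' w)
  one_smulSW : ∀ w, smulSW 1 w = w
  smulWR_add : ∀ w w' r, smulWR (w + w') r = smulWR w r + smulWR w' r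
  add_smulWR : ∀ w r r', smulWR w (r + r') = smulWR w r + smulWR w r'
  mul_smulWR : ∀ w r r', smulWR w (r * r') = smulWR (smulWR w r) r'
  one_smulWR : ∀ w, smulWR w 1 = w
  smul_assocSWR : ∀ s w r, smulWR (smulSW s w) r = smulSW s (smulWR w r)
  mulVW_add_left : ∀ v v' w, mulVW (v + v') w = mulVW v w + mulVW v' w
  mulVW_add_right : ∀ v w w', mulVW v (w + w') = mulVW v w + mulVW v w'
  mulWV_add_left : ∀ w w' v, mulWV (w + w') v = mulWV w v + mulWV w' v
  mulWV_add_right : ∀ w v v', mulWV w (v + v') = mulWV w v + mulWV w v'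
  mulVW_smulR : ∀ r v w, mulVW (smulRV r v) w = r * mulVW v w
  mulVW_smulS : ∀ v s w, mulVW (smulVS v s) w = mulVW v (smulSW s w)
  mulVW_smulWR : ∀ v w r, mulVW v (smulWR w r) = mulVW v w * r
  mulWV_smulS : ∀ s w v, mulWV (smulSW s w) v = s * mulWV w v
  mulWV_smulR : ∀ w r v, mulWV (smulWR w r) v = mulWV w (smulRV r v)
  mulWV_smulVS : ∀ w v s, mulWV w (smulVS v s) = mulWV w v * s
  assocVWV : ∀ v w v', smulRV (mulVW v w) v' = smulVS v (mulWV w v')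
  assocWVW : ∀ w v w', smulSW (mulWV w v) w' = smulWR w (mulVW v w')

namespace MoritaContext

variable {R S V W : Type*} [Ring R] [Ring S] [AddCommGroup V] [AddCommGroup W]
variable (M : MoritaContext R S V W)

/-- The underlying set of the Morita context ring: matrices `((r,v),(w,s))`. -/
def Mat (_ : MoritaContext R S V W) : Type _ := (R × V) × (W × S)

instance : AddCommGroup M.Mat := inferInstanceAs (AddCommGroup ((R × V) × (W × S)))


@[simp] lemma add_fst_fst (a b : M.Mat) : (a + b).1.1 = a.1.1 + b.1.1 := rfl
@[simp] lemma add_fst_snd (a b : M.Mat) : (a + b).1.2 = a.1.2 + b.1.2 := rfl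
@[simp] lemma add_snd_fst (a b : M.Mat) : (a + b).2.1 = a.2.1 + b.2.1 := rfl
@[simp] lemma add_snd_snd (a b : M.Mat) : (a + b).2.2 = a.2.2 + b.2.2 := rfl
@[simp] lemma neg_fst_fst (a : M.Mat) : (-a).1.1 = -a.1.1 := rfl
@[simp] lemma neg_fst_snd (a : M.Mat) : (-a).1.2 = -a.1.2 := rfl
@[simp] lemma neg_snd_fst (a : M.Mat) : (-a).2.1 = -a.2.1 := rfl
@[simp] lemma neg_snd_snd (a : M.Mat) : (-a).2.2 = -a.2.2 := rfl
@[simp] lemma zero_fst_fst : (0 : M.Mat).1.1 = 0 := rfl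
@[simp] lemma zero_fst_snd : (0 : M.Mat).1.2 = 0 := rfl
@[simp] lemma zero_snd_fst : (0 : M.Mat).2.1 = 0 := rfl
@[simp] lemma zero_snd_snd : (0 : M.Mat).2.2 = 0 := rfl

/-- The matrix `((r,v),(w,s))` as an element of the Morita context ring. -/
def mat (r : R) (v : V) (w : W) (s : S) : M.Mat := ((r, v), (w, s))

lemma smulRV_zero (r : R) : M.smulRV r 0 = 0 := by
  have h := M.smulRV_add r 0 0
  rw [add_zero] at h
  exact (add_eq_left.mp h.symm)

lemma zero_smulRV (v : V) : M.smulRV 0 v = 0 := by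
  have h := M.add_smulRV 0 0 v
  rw [add_zero] at h
  exact (add_eq_left.mp h.symm)

lemma smulVS_zero (v : V) : M.smulVS v 0 = 0 := by
  have h := M.add_smulVS v 0 0
  rw [add_zero] at h
  exact (add_eq_left.mp h.symm)

lemma zero_smulVS (s : S) : M.smulVS 0 s = 0 := by
  have h := M.smulVS_add 0 0 s
  rw [add_zero] at h
  exact (add_eq_left.mp h.symm)

lemma smulSW_zero (s : S) : M.smulSW s 0 = 0 := by
  have h := M.smulSW_add s 0 0
  rw [add_zero] at h
  exact (add_eq_left.mp h.symm)

lemma zero_smulSW (w : W) : M.smulSW 0 w = 0 := by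
  have h := M.add_smulSW 0 0 w
  rw [add_zero] at h
  exact (add_eq_left.mp h.symm)

lemma smulWR_zero (w : W) : M.smulWR w 0 = 0 := by
  have h := M.add_smulWR w 0 0
  rw [add_zero] at h
  exact (add_eq_left.mp h.symm)

lemma zero_smulWR (r : R) : M.smulWR 0 r = 0 := by
  have h := M.smulWR_add 0 0 r
  rw [add_zero] at h
  exact (add_eq_left.mp h.symm)

lemma mulVW_zero (v : V) : M.mulVW v 0 = 0 := by
  have h := M.mulVW_add_right v 0 0
  rw [add_zero] at h
  exact (add_eq_left.mp h.symm)

lemma zero_mulVW (w : W) : M.mulVW 0 w = 0 := by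
  have h := M.mulVW_add_left 0 0 w
  rw [add_zero] at h
  exact (add_eq_left.mp h.symm)

lemma mulWV_zero (w : W) : M.mulWV w 0 = 0 := by
  have h := M.mulWV_add_right w 0 0
  rw [add_zero] at h
  exact (add_eq_left.mp h.symm)

lemma zero_mulWV (v : V) : M.mulWV 0 v = 0 := by
  have h := M.mulWV_add_left 0 0 v
  rw [add_zero] at h
  exact (add_eq_left.mp h.symm)


lemma mat_ext {a b : M.Mat} (h1 : a.1.1 = b.1.1) (h2 : a.1.2 = b.1.2)
    (h3 : a.2.1 = b.2.1) (h4 : a.2.2 = b.2.2) : a = b :=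
  Prod.ext (Prod.ext h1 h2) (Prod.ext h3 h4)

/-- Multiplication in the Morita context ring. -/
def matMul (a b : M.Mat) : M.Mat :=
  ((a.1.1 * b.1.1 + M.mulVW a.1.2 b.2.1, M.smulRV a.1.1 b.1.2 + M.smulVS a.1.2 b.2.2),
   (M.smulWR a.2.1 b.1.1 + M.smulSW a.2.2 b.2.1, M.mulWV a.2.1 b.1.2 + a.2.2 * b.2.2))

/-- The ring structure on the Morita context matrices. -/
instance : Ring M.Mat where
  __ := (inferInstanceAs (AddCommGroup ((R × V) × (W × S))) : AddCommGroup M.Mat)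
  mul := M.matMul
  one := ((1, 0), (0, 1))
  left_distrib a b c := by
    show M.matMul a (b + c) = M.matMul a b + M.matMul a c
    refine M.mat_ext ?_ ?_ ?_ ?_ <;> simp only [M.add_fst_fst, M.add_fst_snd, M.add_snd_fst, M.add_snd_snd] <;>
      simp [matMul, M.smulRV_add, M.add_smulVS, M.smulSW_add, M.add_smulWR,
        M.mulVW_add_right, M.mulWV_add_right, mul_add] <;> abel
  right_distrib a b c := by
    show M.matMul (a + b) c = M.matMul a c + M.matMul b c
    refine M.mat_ext ?_ ?_ ?_ ?_ <;> simp only [M.add_fst_fst, M.add_fst_snd, M.add_snd_fst, M.add_snd_snd] <;>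
      simp [matMul, M.add_smulRV, M.smulVS_add, M.add_smulSW, M.smulWR_add,
        M.mulVW_add_left, M.mulWV_add_left, add_mul] <;> abel
  zero_mul a := by
    show M.matMul 0 a = 0
    simp [matMul, M.zero_smulRV, M.zero_smulVS, M.zero_smulSW, M.zero_smulWR,
      M.zero_mulVW, M.zero_mulWV] <;> rfl
  mul_zero a := by
    show M.matMul a 0 = 0
    simp [matMul, M.smulRV_zero, M.smulVS_zero, M.smulSW_zero, M.smulWR_zero,
      M.mulVW_zero, M.mulWV_zero] <;> rfl
  mul_assoc a b c := by
    show M.matMul (M.matMul a b) c = M.matMul a (M.matMul b c)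
    refine M.mat_ext ?_ ?_ ?_ ?_ <;>
      simp [matMul, M.smulRV_add, M.add_smulRV, M.mul_smulRV, M.smulVS_add, M.add_smulVS,
        M.mul_smulVS, M.smul_assocRVS, M.smulSW_add, M.add_smulSW, M.mul_smulSW,
        M.smulWR_add, M.add_smulWR, M.mul_smulWR, M.smul_assocSWR,
        M.mulVW_add_left, M.mulVW_add_right, M.mulWV_add_left, M.mulWV_add_right,
        M.mulVW_smulR, M.mulVW_smulS, M.mulVW_smulWR, M.mulWV_smulS, M.mulWV_smulR,
        M.mulWV_smulVS, M.assocVWV, M.assocWVW, mul_add, add_mul, mul_assoc] <;> abel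
  one_mul a := by
    show M.matMul ((1, 0), (0, 1)) a = a
    simp [matMul, M.one_smulRV, M.one_smulSW, M.zero_smulVS, M.zero_smulWR,
      M.zero_mulVW, M.zero_mulWV] <;> rfl
  mul_one a := by
    show M.matMul a ((1, 0), (0, 1)) = a
    simp [matMul, M.one_smulVS, M.one_smulWR, M.smulRV_zero, M.smulSW_zero,
      M.mulVW_zero, M.mulWV_zero] <;> rfl

/-- The "rectangular" subset `(I, V₁, W₁, J)` of the Morita context ring. -/
def rect (I : Set R) (V₁ : Set V) (W₁ : Set W) (J : Set S) : Set M.Mat :=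
  {t | t.1.1 ∈ I ∧ t.1.2 ∈ V₁ ∧ t.2.1 ∈ W₁ ∧ t.2.2 ∈ J}

end MoritaContext

/-- A subset of a ring is a right ideal. -/
def IsRightIdealSet {A : Type*} [Ring A] (U : Set A) : Prop :=
  (0 : A) ∈ U ∧ (∀ a ∈ U, ∀ b ∈ U, a + b ∈ U) ∧ (∀ a ∈ U, -a ∈ U) ∧
    ∀ a ∈ U, ∀ t : A, a * t ∈ U

/-- A subset of a ring is a two-sided ideal. -/
def IsIdealSet {A : Type*} [Ring A] (U : Set A) : Prop :=
  (0 : A) ∈ U ∧ (∀ a ∈ U, ∀ b ∈ U, a + b ∈ U) ∧ (∀ a ∈ U, -a ∈ U) ∧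
    (∀ a ∈ U, ∀ t : A, a * t ∈ U) ∧ ∀ a ∈ U, ∀ t : A, t * a ∈ U

/-- A proper two-sided ideal `U` is prime if `aAb ⊆ U` implies `a ∈ U` or `b ∈ U`. -/
def IsPrimeIdealSet {A : Type*} [Ring A] (U : Set A) : Prop :=
  IsIdealSet U ∧ U ≠ Set.univ ∧ ∀ a b : A, (∀ x : A, a * x * b ∈ U) → a ∈ U ∨ b ∈ U

/-- A proper two-sided ideal `U` is semiprime if `aAa ⊆ U` implies `a ∈ U`. -/
def IsSemiprimeIdealSet {A : Type*} [Ring A] (U : Set A) : Prop :=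
  IsIdealSet U ∧ U ≠ Set.univ ∧ ∀ a : A, (∀ x : A, a * x * a ∈ U) → a ∈ U

/-- A proper right ideal `U` is prime if `aAb ⊆ U` implies `a ∈ U` or `b ∈ U`. -/
def IsPrimeRightIdealSet {A : Type*} [Ring A] (U : Set A) : Prop :=
  IsRightIdealSet U ∧ U ≠ Set.univ ∧ ∀ a b : A, (∀ x : A, a * x * b ∈ U) → a ∈ U ∨ b ∈ U

/-- The prime radical of a ring: the intersection of all its prime ideals. -/
def primeRadicalSet (A : Type*) [Ring A] : Set A := ⋂₀ {U | IsPrimeIdealSet U}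

/-- A ring `A` is prime if `aAb = 0` implies `a = 0` or `b = 0`. -/
def IsPrimeRing (A : Type*) [Ring A] : Prop :=
  ∀ a b : A, (∀ x : A, a * x * b = 0) → a = 0 ∨ b = 0

/-- A ring `A` is semiprime if `aAa = 0` implies `a = 0`. -/
def IsSemiprimeRing (A : Type*) [Ring A] : Prop :=
  ∀ a : A, (∀ x : A, a * x * a = 0) → a = 0

/-- The Morita context `(A,A,A,A)` over a commutative ring with all products
given by multiplication in `A`. -/
def MoritaContext.ofComm (A : Type*) [CommRing A] : MoritaContext A A A A := by
  refine ⟨(· * ·), (· * ·), (· * ·), (· * ·), (· * ·), (· * ·), ?_, ?_, ?_, ?_, ?_, ?_, ?_, ?_, ?_, ?_, ?_, ?_, ?_, ?_, ?_, ?_, ?_, ?_, ?_, ?_, ?_, ?_, ?_, ?_, ?_, ?_, ?_, ?_, ?_, ?_⟩ <;>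
    intros <;> ring

/-- The Morita context `(A, I, J, A)` over a commutative ring `A` with ideals
`I`, `J`, all products given by multiplication in `A`. -/
def MoritaContext.ofIdeals (A : Type*) [CommRing A] (I J : Ideal A) :
    MoritaContext A A I J := by
  refine ⟨fun r v => ⟨r * v.1, I.mul_mem_left r v.2⟩,
    fun v s => ⟨v.1 * s, I.mul_mem_right s v.2⟩,
    fun s w => ⟨s * w.1, J.mul_mem_left s w.2⟩,
    fun w r => ⟨w.1 * r, J.mul_mem_right r w.2⟩,
    fun v w => v.1 * w.1, fun w v => w.1 * v.1, ?_, ?_, ?_, ?_, ?_, ?_, ?_, ?_, ?_, ?_, ?_, ?_, ?_, ?_, ?_, ?_, ?_, ?_, ?_, ?_, ?_, ?_, ?_, ?_, ?_, ?_, ?_, ?_, ?_, ?_⟩ <;>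
    intros <;> first
      | (apply Subtype.ext; push_cast; ring)
      | (push_cast; ring)

/-- An ideal containing `1` is everything. -/
lemma one_mem_ideal_eq_univ {A : Type*} [Ring A] {U : Set A} (hU : IsIdealSet U)
    (h1 : (1 : A) ∈ U) : U = Set.univ :=
  Set.eq_univ_of_forall fun a => by simpa using hU.2.2.2.2 1 h1 a

namespace MoritaContext

variable {R S V W : Type*} [Ring R] [Ring S] [AddCommGroup V] [AddCommGroup W]
variable (M : MoritaContext R S V W)

attribute [local simp] smulRV_zero zero_smulRV smulVS_zero zero_smulVS
  smulSW_zero zero_smulSW smulWR_zero zero_smulWR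
  mulVW_zero zero_mulVW mulWV_zero zero_mulWV

lemma mmul (a b : M.Mat) : a * b = M.matMul a b := rfl

@[simp] lemma one_fst_fst : (1 : M.Mat).1.1 = 1 := rfl
@[simp] lemma one_snd_snd : (1 : M.Mat).2.2 = 1 := rfl

/-- Corner embeddings. -/
def em11 (r : R) : M.Mat := ((r, 0), (0, 0))
def em12 (v : V) : M.Mat := ((0, v), (0, 0))
def em21 (w : W) : M.Mat := ((0, 0), (w, 0))
def em22 (s : S) : M.Mat := ((0, 0), (0, s))

lemma em11_zero : em11 M (0 : R) = 0 := rfl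
lemma em22_zero : em22 M (0 : S) = 0 := rfl

lemma em11_add (a b : R) : em11 M (a + b) = em11 M a + em11 M b := by
  refine M.mat_ext ?_ ?_ ?_ ?_ <;> simp only [mmul, add_fst_fst, add_fst_snd, add_snd_fst, add_snd_snd, neg_fst_fst, neg_fst_snd, neg_snd_fst, neg_snd_snd] <;> simp [em11]
lemma em11_neg (a : R) : em11 M (-a) = -(em11 M a) := by
  refine M.mat_ext ?_ ?_ ?_ ?_ <;> simp only [mmul, add_fst_fst, add_fst_snd, add_snd_fst, add_snd_snd, neg_fst_fst, neg_fst_snd, neg_snd_fst, neg_snd_snd] <;> simp [em11]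
lemma em11_mul (a b : R) : em11 M (a * b) = em11 M a * em11 M b := by
  refine M.mat_ext ?_ ?_ ?_ ?_ <;> simp only [mmul, add_fst_fst, add_fst_snd, add_snd_fst, add_snd_snd, neg_fst_fst, neg_fst_snd, neg_snd_fst, neg_snd_snd] <;> simp [mmul, matMul, em11]
lemma em22_add (a b : S) : em22 M (a + b) = em22 M a + em22 M b := by
  refine M.mat_ext ?_ ?_ ?_ ?_ <;> simp only [mmul, add_fst_fst, add_fst_snd, add_snd_fst, add_snd_snd, neg_fst_fst, neg_fst_snd, neg_snd_fst, neg_snd_snd] <;> simp [em22]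
lemma em22_neg (a : S) : em22 M (-a) = -(em22 M a) := by
  refine M.mat_ext ?_ ?_ ?_ ?_ <;> simp only [mmul, add_fst_fst, add_fst_snd, add_snd_fst, add_snd_snd, neg_fst_fst, neg_fst_snd, neg_snd_fst, neg_snd_snd] <;> simp [em22]
lemma em22_mul (a b : S) : em22 M (a * b) = em22 M a * em22 M b := by
  refine M.mat_ext ?_ ?_ ?_ ?_ <;> simp only [mmul, add_fst_fst, add_fst_snd, add_snd_fst, add_snd_snd, neg_fst_fst, neg_fst_snd, neg_snd_fst, neg_snd_snd] <;> simp [mmul, matMul, em22]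

lemma em11_mul_mid (a b : R) (x : M.Mat) :
    em11 M a * x * em11 M b = em11 M (a * x.1.1 * b) := by
  refine M.mat_ext ?_ ?_ ?_ ?_ <;> simp only [mmul, add_fst_fst, add_fst_snd, add_snd_fst, add_snd_snd, neg_fst_fst, neg_fst_snd, neg_snd_fst, neg_snd_snd] <;> simp [mmul, matMul, em11]
lemma em22_mul_mid (a b : S) (x : M.Mat) :
    em22 M a * x * em22 M b = em22 M (a * x.2.2 * b) := by
  refine M.mat_ext ?_ ?_ ?_ ?_ <;> simp only [mmul, add_fst_fst, add_fst_snd, add_snd_fst, add_snd_snd, neg_fst_fst, neg_fst_snd, neg_snd_fst, neg_snd_snd] <;> simp [mmul, matMul, em22]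

lemma mid11 (u t : M.Mat) (c : R) : (u * em11 M c * t).1.1 = u.1.1 * c * t.1.1 := by
  simp only [mmul]; simp [mmul, matMul, em11, mul_assoc]
lemma mid22 (u t : M.Mat) (c : S) : (u * em22 M c * t).2.2 = u.2.2 * c * t.2.2 := by
  simp only [mmul]; simp [mmul, matMul, em22, mul_assoc]

lemma mul_em21_fst (t : M.Mat) (w : W) : (t * em21 M w).1.1 = M.mulVW t.1.2 w := by
  simp only [mmul]; simp [mmul, matMul, em21]
lemma mul_em12_snd (t : M.Mat) (v : V) : (t * em12 M v).2.2 = M.mulWV t.2.1 v := by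
  simp only [mmul]; simp [mmul, matMul, em12]

lemma em12_sandwich (v : V) (z : M.Mat) :
    em12 M v * z * em12 M v = em11 M (M.mulVW v z.2.1) * em12 M v := by
  refine M.mat_ext ?_ ?_ ?_ ?_ <;> simp only [mmul, add_fst_fst, add_fst_snd, add_snd_fst, add_snd_snd, neg_fst_fst, neg_fst_snd, neg_snd_fst, neg_snd_snd] <;> simp [mmul, matMul, em11, em12]
lemma em12_sandwich' (v : V) (z : M.Mat) :
    em12 M v * z * em12 M v = em12 M v * em22 M (M.mulWV z.2.1 v) := by
  refine M.mat_ext ?_ ?_ ?_ ?_ <;> simp only [mmul, add_fst_fst, add_fst_snd, add_snd_fst, add_snd_snd, neg_fst_fst, neg_fst_snd, neg_snd_fst, neg_snd_snd] <;> simp [mmul, matMul, em12, em22, M.assocVWV]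
lemma em21_sandwich (w : W) (z : M.Mat) :
    em21 M w * z * em21 M w = em22 M (M.mulWV w z.1.2) * em21 M w := by
  refine M.mat_ext ?_ ?_ ?_ ?_ <;> simp only [mmul, add_fst_fst, add_fst_snd, add_snd_fst, add_snd_snd, neg_fst_fst, neg_fst_snd, neg_snd_fst, neg_snd_snd] <;> simp [mmul, matMul, em21, em22]
lemma em21_sandwich' (w : W) (z : M.Mat) :
    em21 M w * z * em21 M w = em21 M w * em11 M (M.mulVW z.1.2 w) := by
  refine M.mat_ext ?_ ?_ ?_ ?_ <;> simp only [mmul, add_fst_fst, add_fst_snd, add_snd_fst, add_snd_snd, neg_fst_fst, neg_fst_snd, neg_snd_fst, neg_snd_snd] <;> simp [mmul, matMul, em11, em21, M.assocWVW]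

lemma decomp (t : M.Mat) :
    em11 M t.1.1 + em12 M t.1.2 + em21 M t.2.1 + em22 M t.2.2 = t := by
  refine M.mat_ext ?_ ?_ ?_ ?_ <;> simp only [mmul, add_fst_fst, add_fst_snd, add_snd_fst, add_snd_snd, neg_fst_fst, neg_fst_snd, neg_snd_fst, neg_snd_snd] <;> simp [em11, em12, em21, em22]

/-- The prime ideal of the Morita context ring induced by a prime ideal of `R`. -/
def phiSet (P : Set R) : Set M.Mat := {t | ∀ x y : M.Mat, (x * t * y).1.1 ∈ P}
/-- The prime ideal of the Morita context ring induced by a prime ideal of `S`. -/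
def psiSet (Q : Set S) : Set M.Mat := {t | ∀ x y : M.Mat, (x * t * y).2.2 ∈ Q}

lemma phi_prime {P : Set R} (hP : IsPrimeIdealSet P) : IsPrimeIdealSet (M.phiSet P) := by
  obtain ⟨⟨h0, hadd, hneg, hr, hl⟩, hproper, hprime⟩ := hP
  have h1P : (1 : R) ∉ P := fun h =>
    hproper (one_mem_ideal_eq_univ ⟨h0, hadd, hneg, hr, hl⟩ h)
  refine ⟨⟨?_, ?_, ?_, ?_, ?_⟩, ?_, ?_⟩
  · intro x y; simpa using h0
  · intro a ha b hb x y
    rw [show x * (a + b) * y = x * a * y + x * b * y by rw [mul_add, add_mul],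
      M.add_fst_fst]
    exact hadd _ (ha x y) _ (hb x y)
  · intro a ha x y
    rw [show x * (-a) * y = -(x * a * y) by rw [mul_neg, neg_mul], M.neg_fst_fst]
    exact hneg _ (ha x y)
  · intro a ha t x y
    rw [show x * (a * t) * y = x * a * (t * y) by simp only [mul_assoc]]
    exact ha x (t * y)
  · intro a ha t x y
    rw [show x * (t * a) * y = (x * t) * a * y by simp only [mul_assoc]]
    exact ha (x * t) y
  · intro h
    have h1 : (1 : M.Mat) ∈ M.phiSet P := h ▸ Set.mem_univ _
    have := h1 1 1
    rw [one_mul, mul_one, M.one_fst_fst] at this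
    exact h1P this
  · intro a b h
    by_cases ha : a ∈ M.phiSet P
    · exact Or.inl ha
    · right; intro x y
      simp only [phiSet, Set.mem_setOf_eq] at ha
      push_neg at ha
      obtain ⟨x₀, y₀, hr₀⟩ := ha
      have key : ∀ c : R, (x₀ * a * y₀).1.1 * c * (x * b * y).1.1 ∈ P := by
        intro c
        have h2 := h (y₀ * em11 M c * x) x₀ y
        rw [show x₀ * (a * (y₀ * em11 M c * x) * b) * y
              = (x₀ * a * y₀) * em11 M c * (x * b * y) by simp only [mul_assoc]] at h2
        rwa [M.mid11] at h2
      rcases hprime _ _ key with h' | h'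
      · exact absurd h' hr₀
      · exact h'

lemma psi_prime {Q : Set S} (hQ : IsPrimeIdealSet Q) : IsPrimeIdealSet (M.psiSet Q) := by
  obtain ⟨⟨h0, hadd, hneg, hr, hl⟩, hproper, hprime⟩ := hQ
  have h1Q : (1 : S) ∉ Q := fun h =>
    hproper (one_mem_ideal_eq_univ ⟨h0, hadd, hneg, hr, hl⟩ h)
  refine ⟨⟨?_, ?_, ?_, ?_, ?_⟩, ?_, ?_⟩
  · intro x y; simpa using h0
  · intro a ha b hb x y
    rw [show x * (a + b) * y = x * a * y + x * b * y by rw [mul_add, add_mul],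
      M.add_snd_snd]
    exact hadd _ (ha x y) _ (hb x y)
  · intro a ha x y
    rw [show x * (-a) * y = -(x * a * y) by rw [mul_neg, neg_mul], M.neg_snd_snd]
    exact hneg _ (ha x y)
  · intro a ha t x y
    rw [show x * (a * t) * y = x * a * (t * y) by simp only [mul_assoc]]
    exact ha x (t * y)
  · intro a ha t x y
    rw [show x * (t * a) * y = (x * t) * a * y by simp only [mul_assoc]]
    exact ha (x * t) y
  · intro h
    have h1 : (1 : M.Mat) ∈ M.psiSet Q := h ▸ Set.mem_univ _
    have := h1 1 1
    rw [one_mul, mul_one, M.one_snd_snd] at this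
    exact h1Q this
  · intro a b h
    by_cases ha : a ∈ M.psiSet Q
    · exact Or.inl ha
    · right; intro x y
      simp only [psiSet, Set.mem_setOf_eq] at ha
      push_neg at ha
      obtain ⟨x₀, y₀, hr₀⟩ := ha
      have key : ∀ c : S, (x₀ * a * y₀).2.2 * c * (x * b * y).2.2 ∈ Q := by
        intro c
        have h2 := h (y₀ * em22 M c * x) x₀ y
        rw [show x₀ * (a * (y₀ * em22 M c * x) * b) * y
              = (x₀ * a * y₀) * em22 M c * (x * b * y) by simp only [mul_assoc]] at h2
        rwa [M.mid22] at h2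
      rcases hprime _ _ key with h' | h'
      · exact absurd h' hr₀
      · exact h'

lemma corner11 {Q : Set M.Mat} (hQ : IsPrimeIdealSet Q) :
    primeRadicalSet R ⊆ {r | em11 M r ∈ Q} := by
  obtain ⟨⟨h0, hadd, hneg, hr, hl⟩, _, hprime⟩ := hQ
  have hid : IsIdealSet {r : R | em11 M r ∈ Q} := by
    refine ⟨?_, ?_, ?_, ?_, ?_⟩
    · show em11 M (0 : R) ∈ Q; rw [M.em11_zero]; exact h0
    · intro a ha b hb; show em11 M (a + b) ∈ Q; rw [M.em11_add]; exact hadd _ ha _ hb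
    · intro a ha; show em11 M (-a) ∈ Q; rw [M.em11_neg]; exact hneg _ ha
    · intro a ha t; show em11 M (a * t) ∈ Q; rw [M.em11_mul]; exact hr _ ha _
    · intro a ha t; show em11 M (t * a) ∈ Q; rw [M.em11_mul]; exact hl _ ha _
  by_cases h1 : (1 : R) ∈ {r : R | em11 M r ∈ Q}
  · rw [one_mem_ideal_eq_univ hid h1]; exact Set.subset_univ _
  · have hDp : IsPrimeIdealSet {r : R | em11 M r ∈ Q} := by
      refine ⟨hid, fun h => h1 (h ▸ Set.mem_univ _), fun a b h => ?_⟩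
      exact hprime (em11 M a) (em11 M b) fun x => by
        rw [M.em11_mul_mid]; exact h x.1.1
    intro r hr'
    exact Set.mem_sInter.1 hr' _ hDp

lemma corner22 {Q : Set M.Mat} (hQ : IsPrimeIdealSet Q) :
    primeRadicalSet S ⊆ {s | em22 M s ∈ Q} := by
  obtain ⟨⟨h0, hadd, hneg, hr, hl⟩, _, hprime⟩ := hQ
  have hid : IsIdealSet {s : S | em22 M s ∈ Q} := by
    refine ⟨?_, ?_, ?_, ?_, ?_⟩
    · show em22 M (0 : S) ∈ Q; rw [M.em22_zero]; exact h0
    · intro a ha b hb; show em22 M (a + b) ∈ Q; rw [M.em22_add]; exact hadd _ ha _ hb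
    · intro a ha; show em22 M (-a) ∈ Q; rw [M.em22_neg]; exact hneg _ ha
    · intro a ha t; show em22 M (a * t) ∈ Q; rw [M.em22_mul]; exact hr _ ha _
    · intro a ha t; show em22 M (t * a) ∈ Q; rw [M.em22_mul]; exact hl _ ha _
  by_cases h1 : (1 : S) ∈ {s : S | em22 M s ∈ Q}
  · rw [one_mem_ideal_eq_univ hid h1]; exact Set.subset_univ _
  · have hDp : IsPrimeIdealSet {s : S | em22 M s ∈ Q} := by
      refine ⟨hid, fun h => h1 (h ▸ Set.mem_univ _), fun a b h => ?_⟩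
      exact hprime (em22 M a) (em22 M b) fun x => by
        rw [M.em22_mul_mid]; exact h x.2.2
    intro s hs'
    exact Set.mem_sInter.1 hs' _ hDp

lemma em12_mem {Q : Set M.Mat} (hQ : IsPrimeIdealSet Q) {v : V}
    (hv : (∀ w, M.mulVW v w ∈ primeRadicalSet R) ∨
      (∀ w, M.mulWV w v ∈ primeRadicalSet S)) :
    em12 M v ∈ Q := by
  have key : ∀ z : M.Mat, em12 M v * z * em12 M v ∈ Q := by
    intro z
    rcases hv with hv | hv
    · rw [M.em12_sandwich]
      exact hQ.1.2.2.2.1 _ (M.corner11 hQ (hv z.2.1)) _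
    · rw [M.em12_sandwich']
      exact hQ.1.2.2.2.2 _ (M.corner22 hQ (hv z.2.1)) _
  rcases hQ.2.2 _ _ key with h | h <;> exact h

lemma em21_mem {Q : Set M.Mat} (hQ : IsPrimeIdealSet Q) {w : W}
    (hw : (∀ v, M.mulWV w v ∈ primeRadicalSet S) ∨
      (∀ v, M.mulVW v w ∈ primeRadicalSet R)) :
    em21 M w ∈ Q := by
  have key : ∀ z : M.Mat, em21 M w * z * em21 M w ∈ Q := by
    intro z
    rcases hw with hw | hw
    · rw [M.em21_sandwich]
      exact hQ.1.2.2.2.1 _ (M.corner22 hQ (hw z.1.2)) _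
    · rw [M.em21_sandwich']
      exact hQ.1.2.2.2.2 _ (M.corner11 hQ (hw z.1.2)) _
  rcases hQ.2.2 _ _ key with h | h <;> exact h

end MoritaContext

variable {R S V W : Type*} [Ring R] [Ring S] [AddCommGroup V] [AddCommGroup W]

/-- Theorem 2.9 (Sands): the prime radical of the Morita context ring is
`(P(R), V₀, W₀, P(S))` where `V₀ = {v : vW ⊆ P(R)} = {v : Wv ⊆ P(S)}` and
`W₀ = {w : wV ⊆ P(S)} = {w : Vw ⊆ P(R)}`. -/
theorem stmt12 (M : MoritaContext R S V W) :
    primeRadicalSet M.Mat =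
      M.rect (primeRadicalSet R)
        {v : V | ∀ w : W, M.mulVW v w ∈ primeRadicalSet R}
        {w : W | ∀ v : V, M.mulWV w v ∈ primeRadicalSet S}
        (primeRadicalSet S) ∧
    {v : V | ∀ w : W, M.mulVW v w ∈ primeRadicalSet R} =
      {v : V | ∀ w : W, M.mulWV w v ∈ primeRadicalSet S} ∧
    {w : W | ∀ v : V, M.mulWV w v ∈ primeRadicalSet S} =
      {w : W | ∀ v : V, M.mulVW v w ∈ primeRadicalSet R} := by
  have hV : {v : V | ∀ w : W, M.mulVW v w ∈ primeRadicalSet R} =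
      {v : V | ∀ w : W, M.mulWV w v ∈ primeRadicalSet S} := by
    ext v
    simp only [Set.mem_setOf_eq]
    constructor
    · intro hv w
      refine Set.mem_sInter.2 fun U hU => ?_
      have hm : ∀ x y : M.Mat, (x * M.em12 v * y).2.2 ∈ U :=
        M.em12_mem (M.psi_prime hU) (Or.inl hv)
      have h := hm (M.em21 w) 1
      rwa [mul_one, M.mul_em12_snd] at h
    · intro hv w
      refine Set.mem_sInter.2 fun U hU => ?_
      have hm : ∀ x y : M.Mat, (x * M.em12 v * y).1.1 ∈ U :=
        M.em12_mem (M.phi_prime hU) (Or.inr hv)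
      have h := hm 1 (M.em21 w)
      rwa [one_mul, M.mul_em21_fst] at h
  have hW : {w : W | ∀ v : V, M.mulWV w v ∈ primeRadicalSet S} =
      {w : W | ∀ v : V, M.mulVW v w ∈ primeRadicalSet R} := by
    ext w
    simp only [Set.mem_setOf_eq]
    constructor
    · intro hw v
      refine Set.mem_sInter.2 fun U hU => ?_
      have hm : ∀ x y : M.Mat, (x * M.em21 w * y).1.1 ∈ U :=
        M.em21_mem (M.phi_prime hU) (Or.inl hw)
      have h := hm (M.em12 v) 1
      rwa [mul_one, M.mul_em21_fst] at h
    · intro hw v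
      refine Set.mem_sInter.2 fun U hU => ?_
      have hm : ∀ x y : M.Mat, (x * M.em21 w * y).2.2 ∈ U :=
        M.em21_mem (M.psi_prime hU) (Or.inr hw)
      have h := hm 1 (M.em12 v)
      rwa [one_mul, M.mul_em12_snd] at h
  refine ⟨?_, hV, hW⟩
  ext t
  simp only [MoritaContext.rect, Set.mem_setOf_eq]
  constructor
  · intro ht
    have hΦ : ∀ U : Set R, IsPrimeIdealSet U → ∀ x y : M.Mat, (x * t * y).1.1 ∈ U :=
      fun U hU => Set.mem_sInter.1 ht _ (M.phi_prime hU)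
    have hΨ : ∀ U : Set S, IsPrimeIdealSet U → ∀ x y : M.Mat, (x * t * y).2.2 ∈ U :=
      fun U hU => Set.mem_sInter.1 ht _ (M.psi_prime hU)
    refine ⟨?_, ?_, ?_, ?_⟩
    · refine Set.mem_sInter.2 fun U hU => ?_
      have h := hΦ U hU 1 1
      rwa [one_mul, mul_one] at h
    · intro w
      refine Set.mem_sInter.2 fun U hU => ?_
      have h := hΦ U hU 1 (M.em21 w)
      rwa [one_mul, M.mul_em21_fst] at h
    · intro v
      refine Set.mem_sInter.2 fun U hU => ?_
      have h := hΨ U hU 1 (M.em12 v)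
      rwa [one_mul, M.mul_em12_snd] at h
    · refine Set.mem_sInter.2 fun U hU => ?_
      have h := hΨ U hU 1 1
      rwa [one_mul, mul_one] at h
  · rintro ⟨h1, h2, h3, h4⟩
    refine Set.mem_sInter.2 fun Q hQ => ?_
    rw [← M.decomp t]
    have hadd := hQ.1.2.1
    exact hadd _ (hadd _ (hadd _ (M.corner11 hQ h1) _ (M.em12_mem hQ (Or.inl h2))) _
      (M.em21_mem hQ (Or.inl h3))) _ (M.corner22 hQ h4)
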